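/- A finitely generated infinite nilpotent group does not have bounded conjugacy width. -/

import Mathlib

open Subgroup Pointwise
open scoped commutatorElement

universe u

section Aux

variable {G : Type*} [Group G]

/-- Commutators only depend on cosets modulo the center. -/
private lemma commutator_center_invariant (a b z w : G) (hz : z ∈ center G)
    (hw : w ∈ center G) : ⁅a * z, b * w⁆ = ⁅a, b⁆ := by
  have hz' := Subgroup.mem_center_iff.mp hz
  have hw' := Subgroup.mem_center_iff.mp hw
  have hzc : ∀ x : G, z * x * z⁻¹ = x := fun x => by
    rw [← hz' x, mul_assoc, mul_inv_cancel, mul_one]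
  have hwc : ∀ x : G, w * x * w⁻¹ = x := fun x => by
    rw [← hw' x, mul_assoc, mul_inv_cancel, mul_one]
  calc ⁅a * z, b * w⁆ = a * (z * (b * w) * z⁻¹) * a⁻¹ * w⁻¹ * b⁻¹ := by group
    _ = a * (b * w) * a⁻¹ * w⁻¹ * b⁻¹ := by rw [hzc]
    _ = a * b * (w * a⁻¹ * w⁻¹) * b⁻¹ := by group
    _ = a * b * a⁻¹ * b⁻¹ := by rw [hwc]
    _ = ⁅a, b⁆ := (commutatorElement_def a b).symm

private lemma finite_commutatorSet_of_finite_quot_center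
    [Finite (G ⧸ center G)] : Finite (commutatorSet G) := by
  have hsub : commutatorSet G ⊆
      Set.range (fun p : (G ⧸ center G) × (G ⧸ center G) => ⁅p.1.out, p.2.out⁆) := by
    rintro - ⟨a, b, rfl⟩
    refine ⟨(QuotientGroup.mk a, QuotientGroup.mk b), ?_⟩
    obtain ⟨⟨z, hz⟩, hza⟩ := QuotientGroup.mk_out_eq_mul (center G) a
    obtain ⟨⟨w, hw⟩, hwb⟩ := QuotientGroup.mk_out_eq_mul (center G) b
    show ⁅(QuotientGroup.mk a : G ⧸ center G).out, (QuotientGroup.mk b : G ⧸ center G).out⁆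
        = ⁅a, b⁆
    rw [hza, hwb]
    exact commutator_center_invariant a b z w hz hw
  exact (Set.Finite.subset (Set.finite_range _) hsub).to_subtype

/-- A finitely generated nilpotent group with finite abelianisation is finite. -/
private lemma finite_of_fg_nilpotent_finite_ab :
    ∀ (G : Type u) [Group G] [Group.IsNilpotent G],
      Group.FG G → Finite (Abelianization G) → Finite G := by
  intro G _ _
  refine nilpotent_center_quotient_ind
    (P := fun G _ _ => Group.FG G → Finite (Abelianization G) → Finite G) G ?_ ?_
  · intro G _ _ _ _
    exact Finite.of_subsingleton
  · intro G _ _ ih hfg hab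
    have hfg' : Group.FG (G ⧸ center G) := inferInstance
    have hab' : Finite (Abelianization (G ⧸ center G)) := by
      have hsurj : Function.Surjective
          (Abelianization.map (QuotientGroup.mk' (center G))) := by
        intro x
        obtain ⟨q, rfl⟩ : ∃ q, Abelianization.of q = x := Quotient.exists_rep x
        obtain ⟨g, rfl⟩ : ∃ g : G, QuotientGroup.mk g = q := Quotient.exists_rep q
        exact ⟨Abelianization.of g, Abelianization.map_of _ _⟩
      exact Finite.of_surjective _ hsurj
    have hq : Finite (G ⧸ center G) := ih hfg' hab'
    have hcs : Finite (commutatorSet G) := finite_commutatorSet_of_finite_quot_center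
    have hcomm : Finite (commutator G) := inferInstance
    have habq : Finite (G ⧸ commutator G) := hab
    exact Finite.of_subgroup_quotient (commutator G)

private lemma list_prod_mem_pow {M : Type*} [Monoid M] (s : Set M) :
    ∀ l : List M, (∀ y ∈ l, y ∈ s) → l.prod ∈ s ^ l.length := by
  intro l
  induction l with
  | nil => intro _; simp [Set.mem_one]
  | cons a t ih =>
    intro h
    rw [List.prod_cons, List.length_cons, pow_succ']
    exact Set.mul_mem_mul (h a (by simp)) (ih fun y hy => h y (by simp [hy]))

private lemma set_pow_finite {M : Type*} [Monoid M] {s : Set M} (hs : s.Finite) (n : ℕ) :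
    (s ^ n).Finite := by
  induction n with
  | zero => simpa [pow_zero] using Set.finite_one
  | succ n ih => rw [pow_succ]; exact ih.mul hs

end Aux

/-- A finitely generated infinite nilpotent group does not have bounded conjugacy width. -/
theorem infinite_nilpotent_not_bcw {G : Type*} [Group G] [Group.FG G]
    [Group.IsNilpotent G] [Infinite G]
    (X : Set G) (hX : X.Finite) (hgen : Subgroup.closure X = ⊤) :
    ¬ ∃ N : ℕ, ∀ g : G, ∃ l : List G, l.length ≤ N ∧
      (∀ y ∈ l, ∃ x ∈ X, ∃ h : G, y = h⁻¹ * x * h ∨ y = h⁻¹ * x⁻¹ * h) ∧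
      g = l.prod := by
  rintro ⟨N, hN⟩
  -- bounded conjugacy width implies the abelianisation is finite
  set φ := Abelianization.of (G := G) with hφ
  set S : Set (Abelianization G) := φ '' (X ∪ X⁻¹ ∪ {1}) with hS
  have hSfin : S.Finite := ((hX.union hX.inv).union (Set.finite_singleton 1)).image _
  have hcover : (Set.univ : Set (Abelianization G)) ⊆ S ^ N := by
    rintro a -
    obtain ⟨g, rfl⟩ : ∃ g, φ g = a := Quotient.exists_rep a
    obtain ⟨l, hlen, hmem, hprod⟩ := hN g
    have hconj : ∀ (u v : Abelianization G), u⁻¹ * v * u = v := fun u v => by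
      rw [mul_comm u⁻¹ v, mul_assoc, inv_mul_cancel, mul_one]
    set l' : List (Abelianization G) := l.map φ ++ List.replicate (N - l.length) 1 with hl'
    have hlen' : l'.length = N := by
      simp [hl', Nat.add_sub_cancel' hlen]
    have hmem' : ∀ y ∈ l', y ∈ S := by
      intro y hy
      rcases List.mem_append.mp hy with hy | hy
      · obtain ⟨z, hz, rfl⟩ := List.mem_map.mp hy
        obtain ⟨x, hx, h, hzx | hzx⟩ := hmem z hz
        · refine ⟨x, Or.inl (Or.inl hx), ?_⟩
          rw [hzx]; simp only [map_mul, map_inv]; rw [hconj]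
        · refine ⟨x⁻¹, Or.inl (Or.inr (Set.inv_mem_inv.mpr hx)), ?_⟩
          rw [hzx]; simp only [map_mul, map_inv]; rw [hconj]
      · refine ⟨1, Or.inr rfl, ?_⟩
        rw [List.eq_of_mem_replicate hy]; simp
    have hprod' : l'.prod = φ g := by
      rw [hl', List.prod_append, List.prod_replicate, one_pow, mul_one, hprod,
        ← List.prod_hom l φ]
    rw [← hprod', ← hlen']
    exact list_prod_mem_pow S l' hmem'
  have : Finite (Abelianization G) :=
    Set.finite_univ_iff.mp ((set_pow_finite hSfin N).subset hcover)
  have : Finite G := finite_of_fg_nilpotent_finite_ab G inferInstance this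
  exact absurd this (Infinite.not_finite)
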